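/- Let p be a prime, k a positive integer, and n > gcd(k, p-1). Let c_1, ..., c_n be integers each coprime to p. Then the congruence c_1 x_1^k + ... + c_n x_n^k ≡ 0 (mod p) has a solution with x_1 not divisible by p. -/

import Mathlib

open Finset Pointwise

/-- Iterated Cauchy-Davenport over a finite index set. -/
lemma cd_iter {p : ℕ} (hp : p.Prime) {ι : Type*} (t : Finset ι)
    (f : ι → Finset (ZMod p)) (ht : t.Nonempty) (hf : ∀ i ∈ t, (f i).Nonempty) :
    min p ((∑ i ∈ t, ((f i).card - 1)) + 1) ≤ (∑ i ∈ t, f i).card := by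
  classical
  induction t using Finset.cons_induction with
  | empty => exact absurd ht (by simp)
  | cons a s ha ih =>
    rw [Finset.sum_cons, Finset.sum_cons]
    rcases s.eq_empty_or_nonempty with rfl | hs
    · simp only [Finset.sum_empty, add_zero]
      have h1 : 1 ≤ (f a).card := Finset.card_pos.mpr (hf a (Finset.mem_cons_self a ∅))
      have h2 : (f a).card - 1 + 1 = (f a).card := by omega
      rw [h2]; exact min_le_right _ _
    · have hB : (∑ i ∈ s, f i).Nonempty := by
        have := ih hs (fun i hi => hf i (Finset.mem_cons_of_mem hi))
        rw [← Finset.card_pos]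
        have : 1 ≤ min p ((∑ i ∈ s, ((f i).card - 1)) + 1) :=
          le_min hp.one_lt.le (by omega)
        omega
      have hcd := ZMod.cauchy_davenport hp (hf a (Finset.mem_cons_self a s)) hB
      have hih := ih hs (fun i hi => hf i (Finset.mem_cons_of_mem hi))
      have h1 : 1 ≤ (f a).card := Finset.card_pos.mpr (hf a (Finset.mem_cons_self a s))
      rcases le_or_gt p (∑ i ∈ s, f i).card with h | h
      · have : min p ((f a).card + (∑ i ∈ s, f i).card - 1) = p := by
          rw [min_eq_left]; omega
        rw [this] at hcd
        exact (min_le_left _ _).trans hcd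
      · have hih' : (∑ i ∈ s, ((f i).card - 1)) + 1 ≤ (∑ i ∈ s, f i).card := by
          rcases min_le_iff.mp (le_refl (min p ((∑ i ∈ s, ((f i).card - 1)) + 1))) with _ | _
          · omega
          · omega
        calc min p (((f a).card - 1 + ∑ i ∈ s, ((f i).card - 1)) + 1)
            ≤ min p ((f a).card + (∑ i ∈ s, f i).card - 1) := by
              apply min_le_min le_rfl; omega
          _ ≤ _ := hcd

theorem stmt_0 (p k n : ℕ) (hp : p.Prime) (hk : 1 ≤ k)
    (hn : Nat.gcd k (p - 1) < n) (c : Fin n → ℤ)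
    (hc : ∀ i, IsCoprime (c i) (p : ℤ)) :
    ∃ x : Fin n → ℤ, ¬ (p : ℤ) ∣ x ⟨0, by omega⟩ ∧
      (p : ℤ) ∣ ∑ i, c i * x i ^ k := by
  classical
  haveI : Fact p.Prime := ⟨hp⟩
  haveI : NeZero p := ⟨hp.pos.ne'⟩
  set d := Nat.gcd k (p - 1) with hd
  have hd1 : 1 ≤ d := Nat.gcd_pos_of_pos_left _ hk
  have hn0 : 0 < n := by omega
  set j0 : Fin n := ⟨0, hn0⟩ with hj0
  have hp2 : 2 ≤ p := hp.two_le
  -- coefficients are nonzero mod p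
  have hcne : ∀ i, (c i : ZMod p) ≠ 0 := by
    intro i h
    rw [ZMod.intCast_zmod_eq_zero_iff_dvd] at h
    exact (Nat.prime_iff_prime_int.mp hp).not_unit ((hc i).symm.isUnit_of_dvd' dvd_rfl h)
  -- the set of nonzero k-th powers
  set S : Finset (ZMod p) := (Finset.univ.erase 0).image (fun x => x ^ k) with hS
  have hS0 : ∀ a ∈ S, a ≠ 0 := by
    intro a ha
    obtain ⟨x, hx, rfl⟩ := Finset.mem_image.mp ha
    exact pow_ne_zero _ (Finset.mem_erase.mp hx).1
  have hSne : S.Nonempty := ⟨1, Finset.mem_image.mpr ⟨1, Finset.mem_erase.mpr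
    ⟨one_ne_zero, Finset.mem_univ _⟩, one_pow _⟩⟩
  -- fiber bound
  have hfiber : ∀ a ∈ S,
      ((Finset.univ.erase (0 : ZMod p)).filter (fun x => x ^ k = a)).card ≤ d := by
    intro a ha
    obtain ⟨x0, hx0m, hx0⟩ := Finset.mem_image.mp ha
    have hx0ne : x0 ≠ 0 := (Finset.mem_erase.mp hx0m).1
    have hane : a ≠ 0 := hS0 a ha
    have hle := Finset.card_le_card_of_injOn
      (f := fun x => x * x0⁻¹)
      (s := (Finset.univ.erase (0 : ZMod p)).filter (fun x => x ^ k = a))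
      (t := (Polynomial.nthRoots d (1 : ZMod p)).toFinset) ?_ ?_
    · calc ((Finset.univ.erase (0 : ZMod p)).filter (fun x => x ^ k = a)).card
          ≤ (Polynomial.nthRoots d (1 : ZMod p)).toFinset.card := hle
        _ ≤ Multiset.card (Polynomial.nthRoots d (1 : ZMod p)) :=
            Multiset.toFinset_card_le _
        _ ≤ d := Polynomial.card_nthRoots d 1
    · intro x hx
      simp only [Finset.mem_coe, Finset.mem_filter, Finset.mem_erase] at hx
      obtain ⟨⟨hxne, -⟩, hxk⟩ := hx
      have hu : x * x0⁻¹ ≠ 0 := mul_ne_zero hxne (inv_ne_zero hx0ne)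
      have h1 : (x * x0⁻¹) ^ k = 1 := by
        rw [mul_pow, inv_pow, hx0, hxk, mul_inv_cancel₀ hane]
      have h2 : (x * x0⁻¹) ^ (p - 1) = 1 := ZMod.pow_card_sub_one_eq_one hu
      have h3 : (x * x0⁻¹) ^ d = 1 := orderOf_dvd_iff_pow_eq_one.mp
        (Nat.dvd_gcd (orderOf_dvd_of_pow_eq_one h1) (orderOf_dvd_of_pow_eq_one h2))
      rw [Finset.mem_coe, Multiset.mem_toFinset, Polynomial.mem_nthRoots (by omega : 0 < d)]
      exact h3
    · intro x _ y _ h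
      exact mul_right_cancel₀ (inv_ne_zero hx0ne) h
  -- cardinality bound: p - 1 ≤ S.card * d
  have hcover : (Finset.univ.erase (0 : ZMod p)) ⊆
      S.biUnion (fun a => (Finset.univ.erase (0 : ZMod p)).filter (fun x => x ^ k = a)) := by
    intro x hx
    refine Finset.mem_biUnion.mpr ⟨x ^ k, Finset.mem_image.mpr ⟨x, hx, rfl⟩, ?_⟩
    exact Finset.mem_filter.mpr ⟨hx, rfl⟩
  have hcard : p - 1 ≤ S.card * d := by
    have h1 : (Finset.univ.erase (0 : ZMod p)).card = p - 1 := by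
      rw [Finset.card_erase_of_mem (Finset.mem_univ _), Finset.card_univ, ZMod.card]
    calc p - 1 = (Finset.univ.erase (0 : ZMod p)).card := h1.symm
      _ ≤ (S.biUnion (fun a =>
            (Finset.univ.erase (0 : ZMod p)).filter (fun x => x ^ k = a))).card :=
          Finset.card_le_card hcover
      _ ≤ ∑ a ∈ S, ((Finset.univ.erase (0 : ZMod p)).filter (fun x => x ^ k = a)).card :=
          Finset.card_biUnion_le
      _ ≤ ∑ _a ∈ S, d := Finset.sum_le_sum hfiber
      _ = S.card * d := by rw [Finset.sum_const, smul_eq_mul]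
  have hS1 : 1 ≤ S.card := Finset.card_pos.mpr hSne
  -- the summand finsets
  set A : Fin n → Finset (ZMod p) := fun i =>
    if i = j0 then S.image (fun x => (c i : ZMod p) * x)
    else insert 0 (S.image (fun x => (c i : ZMod p) * x)) with hA
  have hAim : ∀ i, (S.image (fun x => (c i : ZMod p) * x)).card = S.card := fun i =>
    Finset.card_image_of_injective _ (mul_right_injective₀ (hcne i))
  have hAcard : ∀ i, (A i).card - 1 = if i = j0 then S.card - 1 else S.card := by
    intro i
    by_cases h : i = j0
    · simp [hA, h, hAim]
    · have h0 : (0 : ZMod p) ∉ S.image (fun x => (c i : ZMod p) * x) := by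
        intro hmem
        obtain ⟨x, hx, hx0⟩ := Finset.mem_image.mp hmem
        exact (mul_ne_zero (hcne i) (hS0 x hx)) hx0
      simp [hA, h, Finset.card_insert_of_notMem h0, hAim]
  have hAne : ∀ i, (A i).Nonempty := by
    intro i
    by_cases h : i = j0 <;> simp [hA, h, hSne, Finset.Nonempty.image, hSne]
  -- the sum of the cards
  have hsum : (∑ i, ((A i).card - 1)) + 1 = n * S.card := by
    rw [← Finset.add_sum_erase _ _ (Finset.mem_univ j0)]
    have h2 : ∀ i ∈ Finset.univ.erase j0, (A i).card - 1 = S.card := by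
      intro i hi
      rw [hAcard i, if_neg (Finset.mem_erase.mp hi).1]
    rw [Finset.sum_congr rfl h2, Finset.sum_const, smul_eq_mul,
      Finset.card_erase_of_mem (Finset.mem_univ _), Finset.card_univ, Fintype.card_fin,
      hAcard j0, if_pos rfl]
    have h3 : n * S.card = S.card + (n - 1) * S.card := by
      cases n with
      | zero => omega
      | succ m =>
        have : m + 1 - 1 = m := rfl
        rw [this]; ring
    omega
  have hnS : p ≤ n * S.card := by
    calc p ≤ (p - 1) + 1 := by omega
      _ ≤ S.card * d + S.card := by omega
      _ = (d + 1) * S.card := by ring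
      _ ≤ n * S.card := Nat.mul_le_mul_right _ (by omega)
  -- Cauchy-Davenport gives everything
  have hfull := cd_iter hp Finset.univ A ⟨j0, Finset.mem_univ _⟩ (fun i _ => hAne i)
  rw [hsum, min_eq_left hnS] at hfull
  have huniv : (∑ i, A i) = Finset.univ := Finset.eq_univ_of_card _
    (le_antisymm (by simpa [ZMod.card] using Finset.card_le_univ (∑ i, A i))
      (by simpa [ZMod.card] using hfull))
  have h0mem : (0 : ZMod p) ∈ ∑ i, A i := huniv ▸ Finset.mem_univ _
  rw [← Finset.mem_coe, Finset.coe_sum] at h0mem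
  obtain ⟨g, hg, hgsum⟩ := (Set.mem_fintype_sum _ _).mp h0mem
  -- choose k-th power representations
  have hrep : ∀ i, ∃ z : ZMod p, (i = j0 → z ≠ 0) ∧ (c i : ZMod p) * z ^ k = g i := by
    intro i
    have hgi := hg i
    by_cases h : i = j0
    · subst h
      simp only [hA, if_pos rfl, Finset.coe_image, Set.mem_image, Finset.mem_coe] at hgi
      obtain ⟨x, hx, hxe⟩ := hgi
      obtain ⟨y, hym, rfl⟩ := Finset.mem_image.mp hx
      exact ⟨y, fun _ => (Finset.mem_erase.mp hym).1, hxe⟩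
    · simp only [hA, if_neg h, Finset.coe_insert, Set.mem_insert_iff, Finset.coe_image,
        Set.mem_image, Finset.mem_coe] at hgi
      rcases hgi with h0 | ⟨x, hx, hxe⟩
      · exact ⟨0, fun hij => absurd hij h, by
          rw [zero_pow (by omega : k ≠ 0), mul_zero, h0]⟩
      · obtain ⟨y, hym, rfl⟩ := Finset.mem_image.mp hx
        exact ⟨y, fun hij => absurd hij h, hxe⟩
  choose z hz1 hz2 using hrep
  refine ⟨fun i => ((z i).val : ℤ), ?_, ?_⟩
  · intro hdvd
    rw [← ZMod.intCast_zmod_eq_zero_iff_dvd] at hdvd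
    push_cast at hdvd
    rw [ZMod.natCast_val, ZMod.cast_id] at hdvd
    exact hz1 j0 rfl hdvd
  · rw [← ZMod.intCast_zmod_eq_zero_iff_dvd]
    push_cast
    have : ∀ i : Fin n, (c i : ZMod p) * ((z i).val : ZMod p) ^ k = g i := by
      intro i
      rw [ZMod.natCast_val, ZMod.cast_id, hz2]
    rw [Finset.sum_congr rfl (fun i _ => this i), hgsum]
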